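/- For every n ≥ 1, the set Θ_n is finite and #Θ_n = F_n, the n-th Fibonacci number; in particular #Θ_1 = 1, #Θ_2 = 1, and #Θ_{n+1} = #Θ_n + #Θ_{n−1} for n ≥ 2. -/
import Mathlib


open Set Filter

/-- The mediant of two rationals (written in lowest terms). -/
def mediant (x y : ℚ) : ℚ :=
  ((x.num + y.num : ℤ) : ℚ) / ((x.den + y.den : ℕ) : ℚ)

/-- `x` and `y` are consecutive elements of the set `S`. -/
def IsConsecutive (S : Set ℚ) (x y : ℚ) : Prop :=
  x ∈ S ∧ y ∈ S ∧ x < y ∧ ∀ z ∈ S, ¬ (x < z ∧ z < y)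

/-- The Stern–Brocot sequences `ℱ_n`. -/
def sternBrocot : ℕ → Set ℚ
  | 0 => {0, 1}
  | n + 1 => sternBrocot n ∪
      {z | ∃ x y : ℚ, IsConsecutive (sternBrocot n) x y ∧ z = mediant x y}

/-- `Q_n`, the set of mediants newly inserted at step `n ≥ 1` of the
Stern–Brocot construction. -/
def newMediants (n : ℕ) : Set ℚ :=
  {z | ∃ x y : ℚ, IsConsecutive (sternBrocot (n - 1)) x y ∧ z = mediant x y}

/-- Value of the regular continued fraction `[0; a_1, …, a_m]`. -/
def cfVal : List ℕ → ℚ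
  | [] => 0
  | a :: t => 1 / ((a : ℚ) + cfVal t)

/-- `a` is the regular continued fraction expansion `[0; a_1, …, a_m]` of `x`,
with all partial quotients positive and the last one at least `2`. -/
def IsCF (x : ℚ) (a : List ℕ) : Prop :=
  (∀ ai ∈ a, 1 ≤ ai) ∧ 2 ≤ a.getLastD 0 ∧ x = cfVal a

/-- Value of `b_1 - 1/(b_2 - ⋯ - 1/b_l)` (using the convention `1/0 = 0`,
so that `rrTail [b] = b`). -/
def rrTail : List ℕ → ℚ
  | [] => 0
  | b :: t => (b : ℚ) - 1 / rrTail t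

/-- Value of the regular reduced continued fraction
`[[1; b_1, …, b_l]] = 1 - 1/(b_1 - 1/(b_2 - ⋯ - 1/b_l))`. -/
def rrcfVal (b : List ℕ) : ℚ := 1 - 1 / rrTail b

/-- `b` is the regular reduced continued fraction expansion
`[[1; b_1, …, b_l]]` of `x`, with all entries at least `2`. -/
def IsRRCF (x : ℚ) (b : List ℕ) : Prop :=
  (∀ bi ∈ b, 2 ≤ bi) ∧ x = rrcfVal b

/-- `Θ_k`: rationals in `(0,1)` whose regular reduced continued fraction
expansion satisfies `L(x) = b_1 + ⋯ + b_l = k + 1`. -/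
def Theta (k : ℕ) : Set ℚ :=
  {x | x ∈ Set.Ioo (0 : ℚ) 1 ∧ ∃ b : List ℕ, IsRRCF x b ∧ b.sum = k + 1}

/-- `Ξ_n = {0, 1} ∪ Θ_1 ∪ ⋯ ∪ Θ_n`. -/
def Xi (n : ℕ) : Set ℚ :=
  {0, 1} ∪ ⋃ k ∈ Finset.Icc 1 n, Theta k



lemma rrTail_nil : rrTail [] = 0 := rfl

lemma rrTail_gt_one : ∀ b : List ℕ, b ≠ [] → (∀ i ∈ b, 2 ≤ i) → 1 < rrTail b := by
  intro b
  induction b with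
  | nil => simp
  | cons a t ih =>
    intro _ h
    have ha : (2:ℚ) ≤ a := by exact_mod_cast h a (by simp)
    rcases eq_or_ne t [] with rfl | ht
    · simp only [rrTail]
      rw [div_zero]; linarith
    · have h1 : 1 < rrTail t := ih ht (fun i hi => h i (by simp [hi]))
      have : 1 / rrTail t < 1 := by
        rw [div_lt_one (by linarith)]; linarith
      have h0 : 0 < 1 / rrTail t := by positivity
      simp only [rrTail]; linarith

lemma rrTail_nonneg_inv (t : List ℕ) (h : ∀ i ∈ t, 2 ≤ i) :
    0 ≤ 1 / rrTail t ∧ 1 / rrTail t < 1 := by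
  rcases eq_or_ne t [] with rfl | ht
  · simp [rrTail_nil]
  · have h1 := rrTail_gt_one t ht h
    constructor
    · positivity
    · rw [div_lt_one (by linarith)]; linarith

lemma rrTail_mem (a : ℕ) (t : List ℕ) (h : ∀ i ∈ t, 2 ≤ i) :
    (a:ℚ) - 1 < rrTail (a :: t) ∧ rrTail (a :: t) ≤ a := by
  obtain ⟨h0, h1⟩ := rrTail_nonneg_inv t h
  simp only [rrTail]; constructor <;> linarith

lemma rrTail_inj : ∀ b b' : List ℕ, (∀ i ∈ b, 2 ≤ i) → (∀ i ∈ b', 2 ≤ i) →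
    rrTail b = rrTail b' → b = b' := by
  intro b
  induction b with
  | nil =>
    intro b' _ h' he
    rcases eq_or_ne b' [] with rfl | hb'
    · rfl
    · exfalso
      have h1 := rrTail_gt_one b' hb' h'
      rw [← he, rrTail_nil] at h1; norm_num at h1
  | cons a t ih =>
    intro b' h h' he
    rcases b' with _ | ⟨a', t'⟩
    · exfalso
      have h1 := rrTail_gt_one (a::t) (by simp) h
      rw [he, rrTail_nil] at h1; norm_num at h1
    · have ht : ∀ i ∈ t, 2 ≤ i := fun i hi => h i (by simp [hi])
      have ht' : ∀ i ∈ t', 2 ≤ i := fun i hi => h' i (by simp [hi])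
      obtain ⟨m1, m2⟩ := rrTail_mem a t ht
      obtain ⟨m1', m2'⟩ := rrTail_mem a' t' ht'
      have haa : a = a' := by
        rw [he] at m1 m2
        have : (a:ℤ) = a' := by
          have l1 : (a:ℚ) - 1 < a' := by linarith
          have l2 : (a':ℚ) - 1 < a := by linarith
          have l1' : (a:ℤ) - 1 < a' := by exact_mod_cast l1
          have l2' : (a':ℤ) - 1 < a := by exact_mod_cast l2
          omega
        exact_mod_cast this
      subst haa
      have hinv : 1 / rrTail t = 1 / rrTail t' := by
        simp only [rrTail] at he; linarith
      have htt : rrTail t = rrTail t' := by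
        rcases eq_or_ne t [] with rfl | h0 <;> rcases eq_or_ne t' [] with rfl | h0'
        · rfl
        · exfalso
          have p := rrTail_gt_one t' h0' ht'
          have hp : (0:ℚ) < 1 / rrTail t' := by positivity
          rw [rrTail_nil, div_zero] at hinv; linarith
        · exfalso
          have p := rrTail_gt_one t h0 ht
          have hp : (0:ℚ) < 1 / rrTail t := by positivity
          rw [rrTail_nil, div_zero] at hinv; linarith
        · have p1 := rrTail_gt_one t h0 ht
          have p2 := rrTail_gt_one t' h0' ht'
          have hx : rrTail t ≠ 0 := by linarith
          have hy : rrTail t' ≠ 0 := by linarith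
          field_simp at hinv
          linarith
      rw [ih t' ht ht' htt]

lemma rrcfVal_mem (b : List ℕ) (hb : b ≠ []) (h : ∀ i ∈ b, 2 ≤ i) :
    rrcfVal b ∈ Set.Ioo (0:ℚ) 1 := by
  have h1 := rrTail_gt_one b hb h
  have h2 : 1 / rrTail b < 1 := by rw [div_lt_one (by linarith)]; linarith
  have h3 : 0 < 1 / rrTail b := by positivity
  simp only [rrcfVal, Set.mem_Ioo]
  constructor <;> linarith

lemma rrcfVal_inj (b b' : List ℕ) (h : ∀ i ∈ b, 2 ≤ i) (h' : ∀ i ∈ b', 2 ≤ i)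
    (he : rrcfVal b = rrcfVal b') : b = b' := by
  apply rrTail_inj b b' h h'
  have hinv : 1 / rrTail b = 1 / rrTail b' := by
    simp only [rrcfVal] at he; linarith
  rcases eq_or_ne b [] with rfl | h0 <;> rcases eq_or_ne b' [] with rfl | h0'
  · rfl
  · exfalso
    have p := rrTail_gt_one b' h0' h'
    have hp : (0:ℚ) < 1 / rrTail b' := by positivity
    rw [rrTail_nil, div_zero] at hinv; linarith
  · exfalso
    have p := rrTail_gt_one b h0 h
    have hp : (0:ℚ) < 1 / rrTail b := by positivity
    rw [rrTail_nil, div_zero] at hinv; linarith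
  · have p1 := rrTail_gt_one b h0 h
    have p2 := rrTail_gt_one b' h0' h'
    have hx : rrTail b ≠ 0 := by linarith
    have hy : rrTail b' ≠ 0 := by linarith
    field_simp at hinv
    linarith

/-- Set of lists with all entries ≥ 2 and sum `m`. -/
def CompSet (m : ℕ) : Set (List ℕ) := {b | (∀ i ∈ b, 2 ≤ i) ∧ b.sum = m}

def bump : List ℕ → List ℕ
  | [] => []
  | a :: t => (a + 1) :: t

lemma compSet_nonempty_list {m : ℕ} (hm : m ≠ 0) {b : List ℕ} (hb : b ∈ CompSet m) :
    b ≠ [] := by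
  rintro rfl
  exact hm hb.2.symm

lemma compSet_two : CompSet 2 = {[2]} := by
  ext b
  constructor
  · rintro ⟨h2, hs⟩
    rcases b with _ | ⟨a, t⟩
    · simp at hs
    · rcases t with _ | ⟨c, t'⟩
      · simp at hs; simp [hs]
      · have ha := h2 a (by simp)
        have hc := h2 c (by simp)
        simp [List.sum_cons] at hs
        omega
  · rintro rfl
    exact ⟨by simp, by simp⟩

lemma compSet_three : CompSet 3 = {[3]} := by
  ext b
  constructor
  · rintro ⟨h2, hs⟩
    rcases b with _ | ⟨a, t⟩
    · simp at hs
    · rcases t with _ | ⟨c, t'⟩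
      · simp at hs; simp [hs]
      · have ha := h2 a (by simp)
        have hc := h2 c (by simp)
        rcases t' with _ | ⟨d, t''⟩
        · simp [List.sum_cons] at hs; omega
        · have hd := h2 d (by simp)
          simp [List.sum_cons] at hs
          omega
  · rintro rfl
    exact ⟨by simp, by simp⟩

lemma compSet_decomp (m : ℕ) :
    CompSet (m + 2) = (fun t => 2 :: t) '' CompSet m ∪ bump '' CompSet (m + 1) := by
  ext b
  constructor
  · rintro ⟨h2, hs⟩
    have hb : b ≠ [] := by rintro rfl; simp at hs
    rcases b with _ | ⟨a, t⟩
    · exact absurd rfl hb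
    · have ha := h2 a (by simp)
      have ht : ∀ i ∈ t, 2 ≤ i := fun i hi => h2 i (by simp [hi])
      simp only [List.sum_cons] at hs
      rcases eq_or_lt_of_le ha with rfl | ha3
      · left
        exact ⟨t, ⟨ht, by omega⟩, rfl⟩
      · right
        refine ⟨(a - 1) :: t, ⟨?_, ?_⟩, ?_⟩
        · intro i hi
          rcases List.mem_cons.1 hi with rfl | hi
          · omega
          · exact ht i hi
        · simp only [List.sum_cons]; omega
        · simp only [bump]; congr 1; omega
  · rintro (⟨t, ⟨ht, hts⟩, rfl⟩ | ⟨c, ⟨hc2, hcs⟩, rfl⟩)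
    · refine ⟨?_, by simp only [List.sum_cons, hts]; omega⟩
      intro i hi
      rcases List.mem_cons.1 hi with rfl | hi
      · omega
      · exact ht i hi
    · have hc : c ≠ [] := by rintro rfl; simp at hcs
      rcases c with _ | ⟨a, t⟩
      · exact absurd rfl hc
      · refine ⟨?_, ?_⟩
        · intro i hi
          rcases List.mem_cons.1 hi with rfl | hi
          · have := hc2 a (by simp); omega
          · exact hc2 i (by simp [hi])
        · simp only [bump, List.sum_cons] at *
          omega

lemma compSet_disj (m : ℕ) :
    Disjoint ((fun t => 2 :: t) '' CompSet m) (bump '' CompSet (m + 1)) := by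
  rw [Set.disjoint_left]
  rintro b ⟨t, _, rfl⟩ ⟨c, hc, he⟩
  have hcne : c ≠ [] := compSet_nonempty_list (by omega) hc
  rcases c with _ | ⟨a, s⟩
  · exact absurd rfl hcne
  · have := hc.1 a (by simp)
    simp only [bump, List.cons.injEq] at he
    omega

lemma bump_injOn (m : ℕ) : Set.InjOn bump (CompSet (m + 1)) := by
  intro x hx y hy he
  have hxne := compSet_nonempty_list (by omega) hx
  have hyne := compSet_nonempty_list (by omega) hy
  rcases x with _ | ⟨a, t⟩
  · exact absurd rfl hxne
  rcases y with _ | ⟨a', t'⟩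
  · exact absurd rfl hyne
  simp only [bump, List.cons.injEq] at he
  exact by simp [he.2]; omega

lemma compSet_card : ∀ m : ℕ,
    (CompSet (m + 2)).Finite ∧ (CompSet (m + 2)).ncard = Nat.fib (m + 1) := by
  have key : ∀ m : ℕ,
      ((CompSet (m + 2)).Finite ∧ (CompSet (m + 2)).ncard = Nat.fib (m + 1)) ∧
      ((CompSet (m + 3)).Finite ∧ (CompSet (m + 3)).ncard = Nat.fib (m + 2)) := by
    intro m
    induction m with
    | zero =>
      refine ⟨⟨?_, ?_⟩, ⟨?_, ?_⟩⟩ <;>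
        simp [compSet_two, compSet_three, Nat.fib]
    | succ n ih =>
      obtain ⟨⟨f1, c1⟩, ⟨f2, c2⟩⟩ := ih
      have hdec := compSet_decomp (n + 2)
      have hdisj := compSet_disj (n + 2)
      have hf1 : ((fun t => 2 :: t) '' CompSet (n + 2)).Finite := f1.image _
      have hf2 : (bump '' CompSet (n + 3)).Finite := f2.image _
      have hfin : (CompSet (n + 4)).Finite := by
        rw [show n + 4 = n + 2 + 2 by ring, hdec]
        exact hf1.union hf2
      have hcard : (CompSet (n + 4)).ncard = Nat.fib (n + 3) := by
        rw [show n + 4 = n + 2 + 2 by ring, hdec,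
          Set.ncard_union_eq hdisj hf1 hf2,
          Set.ncard_image_of_injOn (fun x _ y _ h => by simpa using h),
          Set.ncard_image_of_injOn (bump_injOn (n + 2)), c1, c2]
        have hfib : Nat.fib (n + 3) = Nat.fib (n + 1) + Nat.fib (n + 2) := by
          have h := Nat.fib_add_two (n := n + 1)
          simpa [show n + 1 + 2 = n + 3 by omega, show n + 1 + 1 = n + 2 by omega] using h
        rw [hfib]
      exact ⟨⟨f2, c2⟩, hfin, hcard⟩
  exact fun m => (key m).1


lemma theta_eq_image (k : ℕ) (hk : 1 ≤ k) :
    Theta k = rrcfVal '' CompSet (k + 1) := by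
  ext x
  constructor
  · rintro ⟨hx, b, ⟨hb2, rfl⟩, hsum⟩
    exact ⟨b, ⟨hb2, hsum⟩, rfl⟩
  · rintro ⟨b, ⟨hb2, hsum⟩, rfl⟩
    have hbne : b ≠ [] := by rintro rfl; simp at hsum
    exact ⟨rrcfVal_mem b hbne hb2, b, ⟨hb2, rfl⟩, hsum⟩

lemma theta_main (k : ℕ) (hk : 1 ≤ k) :
    (Theta k).Finite ∧ (Theta k).ncard = Nat.fib k := by
  obtain ⟨j, rfl⟩ := Nat.exists_eq_add_of_le hk
  obtain ⟨hfin, hcard⟩ := compSet_card j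
  have h2 : 1 + j + 1 = j + 2 := by omega
  have hinj : Set.InjOn rrcfVal (CompSet (1 + j + 1)) :=
    fun x hx y hy he => rrcfVal_inj x y hx.1 hy.1 he
  rw [theta_eq_image (1 + j) hk, h2] at *
  refine ⟨hfin.image _, ?_⟩
  rw [Set.ncard_image_of_injOn (h2 ▸ hinj), hcard,
    show 1 + j = j + 1 by omega]

/-- `Θ_n` is finite with `#Θ_n = F_n`; in particular
`#Θ_1 = #Θ_2 = 1` and `#Θ_{n+1} = #Θ_n + #Θ_{n-1}` for `n ≥ 2`. -/
theorem ncard_Theta_eq_fib :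
    (∀ n : ℕ, 1 ≤ n → (Theta n).Finite ∧ (Theta n).ncard = Nat.fib n) ∧
      (Theta 1).ncard = 1 ∧ (Theta 2).ncard = 1 ∧
      ∀ n : ℕ, 2 ≤ n →
        (Theta (n + 1)).ncard = (Theta n).ncard + (Theta (n - 1)).ncard := by
  have main : ∀ n : ℕ, 1 ≤ n → (Theta n).Finite ∧ (Theta n).ncard = Nat.fib n :=
    theta_main
  refine ⟨main, ?_, ?_, ?_⟩
  · rw [(main 1 (by norm_num)).2]; rfl
  · rw [(main 2 (by norm_num)).2]; rfl
  · intro n hn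
    obtain ⟨j, rfl⟩ := Nat.exists_eq_add_of_le hn
    rw [(main (2 + j + 1) (by omega)).2, (main (2 + j) (by omega)).2,
      show 2 + j - 1 = j + 1 by omega, (main (j + 1) (by omega)).2]
    have h := Nat.fib_add_two (n := j + 1)
    simp only [show j + 1 + 2 = 2 + j + 1 by omega, show j + 1 + 1 = 2 + j by omega] at h
    omega
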